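/- Let x be irrational with regular continued fraction expansion x = a_0 + 1/(a_1 + 1/(a_2 + ⋯)). Then the backward continued fraction expansion of x is ⌊x⌋ + 1 − [2,…,2 (a_1 − 1 times), a_2 + 2, 2,…,2 (a_3 − 1 times), a_4 + 2, …], i.e., the BCF digit sequence of x is obtained by replacing each pair (a_{2k−1}, a_{2k}) by a block of a_{2k−1} − 1 twos followed by the digit a_{2k} + 2. -/

import Mathlib

noncomputable def cfX (x : ℝ) : ℕ → ℝ
  | 0 => Int.fract x
  | n + 1 => Int.fract (1 / cfX x n)

/-- Regular continued fraction partial quotients. -/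
noncomputable def rcfA (x : ℝ) : ℕ → ℤ
  | 0 => ⌊x⌋
  | n + 1 => ⌊1 / cfX x n⌋

/-- The Renyi backward continued fraction map. -/
noncomputable def renyi (y : ℝ) : ℝ := Int.fract (1 / (1 - y))

/-- The (n+1)-st backward continued fraction digit of the fractional part of x. -/
noncomputable def bDigit (x : ℝ) (n : ℕ) : ℤ := ⌊1 / (1 - renyi^[n] (Int.fract x))⌋ + 1

/-- The BCF digit sequence of an irrational x is obtained from its RCF expansion by
replacing each pair (a_{2k-1}, a_{2k}) by a block of a_{2k-1} - 1 twos followed by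
the digit a_{2k} + 2; the digit a_{2k} + 2 sits at BCF position N k = a_1 + a_3 + ... + a_{2k-1},
and here b_n(x) = bDigit x (n-1). -/
private lemma fract_facts {t : ℝ} (h : Irrational t) :
    Irrational (Int.fract t) ∧ Int.fract t ∈ Set.Ioo (0:ℝ) 1 := by
  have hirr : Irrational (Int.fract t) := by
    unfold Int.fract; exact Irrational.sub_intCast h _
  refine ⟨hirr, ⟨?_, Int.fract_lt_one t⟩⟩
  rcases (Int.fract_nonneg t).lt_or_eq with h1 | h1
  · exact h1
  · exact absurd h1.symm (by exact_mod_cast hirr.ne_int 0)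

private lemma cfX_facts (x : ℝ) (hx : Irrational x) (n : ℕ) :
    Irrational (cfX x n) ∧ cfX x n ∈ Set.Ioo (0:ℝ) 1 := by
  induction n with
  | zero => exact fract_facts hx
  | succ n ih =>
      have h1 : Irrational (1 / cfX x n) := by rw [one_div]; exact ih.1.inv
      exact fract_facts h1

private lemma one_sub_inv (m : ℕ) (hm : 1 ≤ m) {z : ℝ} (hz : z ∈ Set.Ioo (0:ℝ) 1) :
    1 / (1 - 1/((m:ℝ)+1+z)) = 1 + 1/((m:ℝ)+z) := by
  have hm1 : (1:ℝ) ≤ m := by exact_mod_cast hm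
  have h1 : (1:ℝ) < (m:ℝ) + z := by linarith [hz.1]
  have h2 : (0:ℝ) < (m:ℝ) + 1 + z := by linarith
  have h3 : (m:ℝ) + z ≠ 0 := by linarith
  have h4 : (m:ℝ) + 1 + z ≠ 0 := by linarith
  have e1 : 1 - 1/((m:ℝ)+1+z) = ((m:ℝ)+z)/((m:ℝ)+1+z) := by
    field_simp
    ring
  rw [e1, one_div_div]
  field_simp
  ring

private lemma inv_small (m : ℕ) (hm : 1 ≤ m) {z : ℝ} (hz : z ∈ Set.Ioo (0:ℝ) 1) :
    0 < 1/((m:ℝ)+z) ∧ 1/((m:ℝ)+z) < 1 := by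
  have hm1 : (1:ℝ) ≤ m := by exact_mod_cast hm
  have h1 : (1:ℝ) < (m:ℝ) + z := by linarith [hz.1]
  constructor
  · positivity
  · rw [div_lt_one (by linarith)]; linarith

private lemma renyi_inv (m : ℕ) (hm : 1 ≤ m) {z : ℝ} (hz : z ∈ Set.Ioo (0:ℝ) 1) :
    renyi (1/((m:ℝ)+1+z)) = 1/((m:ℝ)+z) := by
  obtain ⟨hs1, hs2⟩ := inv_small m hm hz
  unfold renyi
  rw [one_sub_inv m hm hz,
    show (1:ℝ) + 1/((m:ℝ)+z) = ((1:ℤ):ℝ) + 1/((m:ℝ)+z) by norm_num,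
    Int.fract_intCast_add, Int.fract_eq_self.mpr ⟨hs1.le, hs2⟩]

private lemma floor_form (m : ℕ) (hm : 1 ≤ m) {z : ℝ} (hz : z ∈ Set.Ioo (0:ℝ) 1) :
    ⌊1 / (1 - 1/((m:ℝ)+1+z))⌋ = 1 := by
  obtain ⟨hs1, hs2⟩ := inv_small m hm hz
  rw [one_sub_inv m hm hz]
  rw [Int.floor_eq_iff]
  constructor <;> push_cast <;> linarith

private lemma one_sub_last {z : ℝ} (hz : z ∈ Set.Ioo (0:ℝ) 1) :
    1/(1 - 1/(1+z)) = 1/z + 1 := by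
  have h0 : (0:ℝ) < z := hz.1
  have h1 : z ≠ 0 := ne_of_gt h0
  have h2 : (1:ℝ) + z ≠ 0 := by linarith
  field_simp
  rw [add_sub_cancel_left]; exact div_self h1

private lemma renyi_last {z : ℝ} (hz : z ∈ Set.Ioo (0:ℝ) 1) :
    renyi (1/(1+z)) = Int.fract (1/z) := by
  unfold renyi
  rw [one_sub_last hz,
    show 1/z + (1:ℝ) = 1/z + ((1:ℤ):ℝ) by norm_num, Int.fract_add_intCast]

private lemma floor_last {z : ℝ} (hz : z ∈ Set.Ioo (0:ℝ) 1) :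
    ⌊1/(1 - 1/(1+z))⌋ = ⌊1/z⌋ + 1 := by
  rw [one_sub_last hz, Int.floor_add_one]

private lemma floor_pos_nat {y : ℝ} (hmem : y ∈ Set.Ioo (0:ℝ) 1) : 1 ≤ ⌊1/y⌋.toNat := by
  have hy0 : 0 < y := hmem.1
  have hgt : 1 < 1/y := by rw [lt_div_iff₀ hy0]; linarith [hmem.2]
  have : (1:ℤ) ≤ ⌊1/y⌋ := by exact_mod_cast Int.le_floor.mpr (by exact_mod_cast hgt.le)
  omega

private lemma split_y {y : ℝ} (hmem : y ∈ Set.Ioo (0:ℝ) 1) :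
    y = 1/((⌊1/y⌋.toNat : ℝ) + Int.fract (1/y)) := by
  have h1 := floor_pos_nat hmem
  have hnn : (0:ℤ) ≤ ⌊1/y⌋ := by omega
  have : (⌊1/y⌋.toNat : ℝ) = (⌊1/y⌋ : ℝ) := by exact_mod_cast Int.toNat_of_nonneg hnn
  rw [this, Int.floor_add_fract, one_div_one_div]

private lemma iter_form (y : ℝ) (hy : Irrational y) (hmem : y ∈ Set.Ioo (0:ℝ) 1) :
    ∀ i, i ≤ ⌊1/y⌋.toNat - 1 →
      renyi^[i] y = 1/(((⌊1/y⌋.toNat - i : ℕ):ℝ) + Int.fract (1/y)) := by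
  set a := ⌊1/y⌋.toNat with ha
  have hz : Int.fract (1/y) ∈ Set.Ioo (0:ℝ) 1 :=
    (fract_facts (show Irrational (1/y) by rw [one_div]; exact hy.inv)).2
  intro i
  induction i with
  | zero =>
      intro _
      simp only [Function.iterate_zero, id_eq, Nat.sub_zero]
      exact split_y hmem
  | succ i ih =>
      intro hi
      have ha1 := floor_pos_nat hmem
      have hi' : i ≤ a - 1 := by omega
      rw [Function.iterate_succ_apply', ih hi']
      rw [show (a - i : ℕ) = (a - (i+1)) + 1 from by omega]
      push_cast
      exact renyi_inv (a - (i+1)) (by omega) hz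

private lemma iter_full (y : ℝ) (hy : Irrational y) (hmem : y ∈ Set.Ioo (0:ℝ) 1) :
    renyi^[⌊1/y⌋.toNat] y = Int.fract (1 / Int.fract (1/y)) := by
  have ha1 := floor_pos_nat hmem
  have hz : Int.fract (1/y) ∈ Set.Ioo (0:ℝ) 1 :=
    (fract_facts (show Irrational (1/y) by rw [one_div]; exact hy.inv)).2
  rw [show ⌊1/y⌋.toNat = (⌊1/y⌋.toNat - 1) + 1 from by omega,
    Function.iterate_succ_apply', iter_form y hy hmem (⌊1/y⌋.toNat - 1) (by omega),
    show ⌊1/y⌋.toNat - (⌊1/y⌋.toNat - 1) = 1 from by omega]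
  push_cast
  exact renyi_last hz

private lemma two_step (x : ℝ) (hx : Irrational x) (m : ℕ) :
    renyi^[(rcfA x (2*m+1)).toNat] (cfX x (2*m)) = cfX x (2*m+2) := by
  have h := cfX_facts x hx (2*m)
  have hr : rcfA x (2*m+1) = ⌊1/cfX x (2*m)⌋ := rfl
  rw [hr, iter_full _ h.1 h.2]
  rfl

private lemma iter_N (x : ℝ) (hx : Irrational x) (k : ℕ) :
    renyi^[∑ j ∈ Finset.Icc 1 k, (rcfA x (2*j-1)).toNat] (Int.fract x) = cfX x (2*k) := by
  induction k with
  | zero => simp [cfX]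
  | succ k ih =>
      rw [Finset.sum_Icc_succ_top (by omega), Nat.add_comm, Function.iterate_add_apply, ih,
        show 2*(k+1) - 1 = 2*k+1 from by omega, show 2*(k+1) = 2*k+2 from by omega]
      exact two_step x hx k


theorem stmt12 (x : ℝ) (hx : Irrational x) (k : ℕ) (hk : 1 ≤ k) :
    (∀ n : ℕ,
        (∑ j ∈ Finset.Icc 1 (k - 1), (rcfA x (2 * j - 1)).toNat) < n →
        n < ∑ j ∈ Finset.Icc 1 k, (rcfA x (2 * j - 1)).toNat →
        bDigit x (n - 1) = 2) ∧
    bDigit x ((∑ j ∈ Finset.Icc 1 k, (rcfA x (2 * j - 1)).toNat) - 1)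
      = rcfA x (2 * k) + 2 := by
  obtain ⟨K, rfl⟩ : ∃ K, k = K + 1 := ⟨k - 1, by omega⟩
  have hfacts := cfX_facts x hx (2*K)
  have hzfacts := cfX_facts x hx (2*K+1)
  set z := cfX x (2*K+1) with hzdef
  have hzeq : Int.fract (1/cfX x (2*K)) = z := rfl
  set a := (rcfA x (2*(K+1) - 1)).toNat with haa
  have hidx : 2*(K+1) - 1 = 2*K+1 := by omega
  have hr : rcfA x (2*K+1) = ⌊1/cfX x (2*K)⌋ := rfl
  have haeq : a = ⌊1/cfX x (2*K)⌋.toNat := by rw [haa, hidx, hr]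
  have hapos : 1 ≤ a := by rw [haeq]; exact floor_pos_nat hfacts.2
  have hN := iter_N x hx K
  set N := ∑ j ∈ Finset.Icc 1 K, (rcfA x (2*j-1)).toNat with hNdef
  have hsum : ∑ j ∈ Finset.Icc 1 (K+1), (rcfA x (2*j-1)).toNat = N + a := by
    rw [hNdef, ← Finset.sum_Icc_succ_top (by omega : 1 ≤ K + 1)]
  have hform : ∀ i, i ≤ a - 1 → renyi^[N + i] (Int.fract x)
      = 1/(((a - i : ℕ):ℝ) + z) := by
    intro i hi
    rw [Nat.add_comm, Function.iterate_add_apply, hN, ← hzeq, haeq]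
    exact iter_form (cfX x (2*K)) hfacts.1 hfacts.2 i (by rw [← haeq]; exact hi)
  have hsum' : ∑ j ∈ Finset.Icc 1 (K+1), (rcfA x (2 * j - 1)).toNat = N + a := hsum
  constructor
  · intro n h1 h2
    rw [Nat.add_sub_cancel] at h1
    rw [hsum'] at h2
    have hNdef' : (∑ j ∈ Finset.Icc 1 K, (rcfA x (2 * j - 1)).toNat) = N := rfl
    rw [hNdef'] at h1
    have hi : n - 1 = N + (n - 1 - N) := by omega
    have hile : n - 1 - N ≤ a - 2 := by omega
    unfold bDigit
    rw [hi, hform (n - 1 - N) (by omega),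
      show (a - (n - 1 - N) : ℕ) = (a - (n - 1 - N) - 1) + 1 from by omega]
    push_cast
    rw [floor_form (a - (n - 1 - N) - 1) (by omega) hzfacts.2]
    norm_num
  · rw [hsum', show N + a - 1 = N + (a - 1) from by omega]
    unfold bDigit
    rw [hform (a - 1) le_rfl, show (a - (a - 1) : ℕ) = 1 from by omega]
    push_cast
    rw [floor_last hzfacts.2]
    have : rcfA x (2 * (K + 1)) = ⌊1/z⌋ := by
      rw [show 2*(K+1) = (2*K+1)+1 from rfl]; rfl
    rw [this]
    ring
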